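/- Let e_1,…,e_m be a basis of ℝ^m, K = cone{e_1,…,e_m} the generated simplicial cone, and u_1,…,u_m the dual basis with ⟨e_i, u_j⟩ = δ_{ij}, so K* = cone{u_1,…,u_m}. Let a be a unit vector and H = {x : ⟨a,x⟩ = 0}. Then the hyperplane H is K-invariant if and only if ⟨a, e_i⟩⟨a, u_j⟩ ≤ δ_{ij} for all i, j ∈ {1,…,m}. -/

import Mathlib

open RealInnerProductSpace

noncomputable section

abbrev E (m : ℕ) := EuclideanSpace ℝ (Fin m)

/-- `P` is the metric projection map: for every nonempty closed convex set `D`,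
`P D x` lies in `D` and satisfies the variational characterization. -/
def IsProjMap {m : ℕ} (P : Set (E m) → E m → E m) : Prop :=
  ∀ D : Set (E m), D.Nonempty → IsClosed D → Convex ℝ D →
    ∀ x, P D x ∈ D ∧ ∀ y ∈ D, ⟪P D x - x, P D x - y⟫ ≤ 0

/-- The dual cone of `K`. -/
def dualCone {m : ℕ} (K : Set (E m)) : Set (E m) :=
  {y | ∀ x ∈ K, 0 ≤ ⟪x, y⟫}

/-- `x ⊓ y = P_{x-K} y`. -/
def meet {m : ℕ} (P : Set (E m) → E m → E m) (K : Set (E m)) (x y : E m) : E m :=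
  P ((fun k => x - k) '' K) y

/-- `x ⊔ y = P_{x+K} y`. -/
def join {m : ℕ} (P : Set (E m) → E m → E m) (K : Set (E m)) (x y : E m) : E m :=
  P ((fun k => x + k) '' K) y

/-- `C` is `K`-invariant: closed under `meet` and `join`. -/
def KInv {m : ℕ} (P : Set (E m) → E m → E m) (K C : Set (E m)) : Prop :=
  ∀ x ∈ C, ∀ y ∈ C, meet P K x y ∈ C ∧ join P K x y ∈ C

theorem simplicial_hyperplane_invariance (m : ℕ)
    (P : Set (E m) → E m → E m) (hP : IsProjMap P)
    (b : Module.Basis (Fin m) ℝ (E m)) (u : Fin m → E m)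
    (hu : ∀ i j, ⟪b i, u j⟫ = if i = j then (1 : ℝ) else 0)
    (K : Set (E m))
    (hK : K = {x : E m | ∃ t : Fin m → ℝ, (∀ i, 0 ≤ t i) ∧ x = ∑ i, t i • b i})
    (a : E m) (ha : ‖a‖ = 1)
    (H : Set (E m)) (hH : H = {x : E m | ⟪a, x⟫ = 0}) :
    KInv P K H ↔
      ∀ i j, ⟪a, b i⟫ * ⟪a, u j⟫ ≤ if i = j then (1 : ℝ) else 0 := by
  have haa : ⟪a, a⟫ = (1 : ℝ) := by
    rw [real_inner_self_eq_norm_sq, ha]; norm_num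
  -- coordinates with respect to the dual basis
  have hcoord : ∀ (x : E m) (j : Fin m), ⟪x, u j⟫ = b.repr x j := by
    intro x j
    conv_lhs => rw [← b.sum_repr x]
    rw [sum_inner]
    simp only [real_inner_smul_left, hu, mul_ite, mul_one, mul_zero]
    simp
  have hsum : ∀ (t : Fin m → ℝ) (j : Fin m), ⟪∑ i, t i • b i, u j⟫ = t j := by
    intro t j
    rw [hcoord]
    simp [Module.Basis.repr_sum_self, Finsupp.single_apply]
  -- membership in K
  have hmemK : ∀ x : E m, x ∈ K ↔ ∀ j, 0 ≤ ⟪x, u j⟫ := by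
    intro x
    constructor
    · rintro hx j
      rw [hK] at hx
      obtain ⟨t, ht, rfl⟩ := hx
      rw [hsum]; exact ht j
    · intro h
      rw [hK]
      refine ⟨fun i => b.repr x i, fun i => ?_, (b.sum_repr x).symm⟩
      show (0:ℝ) ≤ b.repr x i
      rw [← hcoord]; exact h i
  have hK0 : (0 : E m) ∈ K := by
    rw [hmemK]; intro j; simp
  have hKne : K.Nonempty := ⟨0, hK0⟩
  have hKeq : K = ⋂ j, {x : E m | 0 ≤ ⟪x, u j⟫} := by
    ext x; simp [hmemK x, Set.mem_iInter]
  have hKcl : IsClosed K := by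
    rw [hKeq]
    exact isClosed_iInter fun j =>
      isClosed_le continuous_const (Continuous.inner continuous_id continuous_const)
  have hKcv : Convex ℝ K := by
    rw [hKeq]
    refine convex_iInter fun j => ?_
    intro p hp q hq α β hα hβ hαβ
    simp only [Set.mem_setOf_eq] at *
    rw [inner_add_left, real_inner_smul_left, real_inner_smul_left]
    positivity
  have hH0 : (0 : E m) ∈ H := by rw [hH]; simp
  -- the linear projection onto H maps K into K, given the condition
  have hPH : (∀ i j, ⟪a, b i⟫ * ⟪a, u j⟫ ≤ if i = j then (1 : ℝ) else 0) →
      ∀ v ∈ K, v - ⟪a, v⟫ • a ∈ K := by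
    intro hc v hv
    rw [hK] at hv
    obtain ⟨t, ht, rfl⟩ := hv
    rw [hmemK]
    intro j
    rw [inner_sub_left, real_inner_smul_left, hsum]
    have hav : ⟪a, ∑ i, t i • b i⟫ = ∑ i, t i * ⟪a, b i⟫ := by
      rw [inner_sum]; simp only [real_inner_smul_right]
    rw [hav]
    have h1 : t j = ∑ i, t i * (if i = j then (1 : ℝ) else 0) := by
      simp
    rw [h1, Finset.sum_mul, ← Finset.sum_sub_distrib]
    refine Finset.sum_nonneg fun i _ => ?_
    rw [mul_assoc, ← mul_sub]
    exact mul_nonneg (ht i) (sub_nonneg.2 (hc i j))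
  constructor
  · -- KInv → condition
    intro hinv i j
    have hbK : b i ∈ K := by
      rw [hK]
      refine ⟨fun k => if k = i then 1 else 0, fun k => ?_, ?_⟩
      · show (0:ℝ) ≤ if k = i then 1 else 0
        split <;> norm_num
      simp [ite_smul]
    set γ : ℝ := ⟪a, b i⟫ with hγ
    set w : E m := b i - γ • a with hw
    have hwH : w ∈ H := by
      rw [hH]
      simp only [Set.mem_setOf_eq, hw, inner_sub_right, real_inner_smul_right, haa]
      ring
    have hjoin := (hinv 0 hH0 w hwH).2
    have himg : (fun k => (0 : E m) + k) '' K = K := by simp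
    rw [join, himg] at hjoin
    obtain ⟨hzK, hvar⟩ := hP K hKne hKcl hKcv w
    set z : E m := P K w with hz
    have hz0 : ⟪a, z⟫ = 0 := by rw [hH] at hjoin; exact hjoin
    have hw0 : ⟪a, w⟫ = 0 := by rw [hH] at hwH; exact hwH
    have hvbi := hvar (b i) hbK
    have hzw : z - b i = (z - w) - γ • a := by
      rw [hw]; module
    have hortho : ⟪z - w, a⟫ = 0 := by
      rw [real_inner_comm, inner_sub_right, hz0, hw0]; ring
    have hle : ⟪z - w, z - w⟫ ≤ 0 := by
      have : ⟪z - w, z - b i⟫ = ⟪z - w, z - w⟫ - γ * ⟪z - w, a⟫ := by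
        rw [hzw, inner_sub_right, real_inner_smul_right]
      rw [this, hortho] at hvbi
      linarith
    have hzww : z - w = 0 := real_inner_self_nonpos.mp hle
    have hwK : w ∈ K := by
      have : w = z := by
        have := sub_eq_zero.mp hzww; exact this.symm
      rw [this]; exact hzK
    rw [hmemK] at hwK
    have := hwK j
    rw [hw, inner_sub_left, real_inner_smul_left, hu] at this
    linarith
  · -- condition → KInv
    intro hc x hx y hy
    rw [hH] at hx hy
    have hx' : ⟪a, x⟫ = 0 := hx
    have hy' : ⟪a, y⟫ = 0 := hy
    constructor
    · -- meet
      set M : Set (E m) := (fun k => x - k) '' K with hM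
      have hMne : M.Nonempty := ⟨x - 0, ⟨0, hK0, rfl⟩⟩
      have hMcl : IsClosed M := by
        have h2 := (Homeomorph.subLeft x).isClosedMap K hKcl
        have h3 : ⇑(Homeomorph.subLeft x) '' K = M := by
          ext p; simp [hM, Equiv.subLeft, eq_comm]
        rwa [h3] at h2
      have hMcv : Convex ℝ M := by
        rw [hM, ← Set.singleton_sub]; exact (convex_singleton x).sub hKcv
      obtain ⟨hzM, hvar⟩ := hP M hMne hMcl hMcv y
      set z : E m := P M y with hz
      obtain ⟨k, hkK, hzk⟩ := hzM
      set γ : ℝ := ⟪a, z⟫ with hγ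
      have hγk : γ = -⟪a, k⟫ := by
        rw [hγ, ← hzk]
        show ⟪a, x - k⟫ = -⟪a, k⟫
        rw [inner_sub_right, hx']; ring
      have hk' : k - ⟪a, k⟫ • a ∈ K := hPH hc k hkK
      have hz'M : x - (k - ⟪a, k⟫ • a) ∈ M := ⟨_, hk', rfl⟩
      have hz'eq : x - (k - ⟪a, k⟫ • a) = z - γ • a := by
        rw [hγk, ← hzk]; module
      rw [hz'eq] at hz'M
      have hvar' := hvar _ hz'M
      have hcalc : ⟪z - y, z - (z - γ • a)⟫ = γ * γ := by
        have h1 : z - (z - γ • a) = γ • a := by module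
        rw [h1, real_inner_smul_right, real_inner_comm a (z - y), inner_sub_right, hy', ← hγ]
        ring
      rw [hcalc] at hvar'
      have hγ0 : γ = 0 := by
        have := mul_self_nonneg γ
        have h0 : γ * γ = 0 := le_antisymm hvar' this
        exact mul_self_eq_zero.mp h0
      show meet P K x y ∈ H
      rw [hH]
      exact hγ0
    · -- join
      set M : Set (E m) := (fun k => x + k) '' K with hM
      have hMne : M.Nonempty := ⟨x + 0, ⟨0, hK0, rfl⟩⟩
      have hMcl : IsClosed M := by
        have h2 := (Homeomorph.addLeft x).isClosedMap K hKcl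
        have h3 : ⇑(Homeomorph.addLeft x) '' K = M := by
          ext p; simp [hM, eq_comm]
        rwa [h3] at h2
      have hMcv : Convex ℝ M := by
        rw [hM, ← Set.singleton_add]; exact (convex_singleton x).add hKcv
      obtain ⟨hzM, hvar⟩ := hP M hMne hMcl hMcv y
      set z : E m := P M y with hz
      obtain ⟨k, hkK, hzk⟩ := hzM
      set γ : ℝ := ⟪a, z⟫ with hγ
      have hγk : γ = ⟪a, k⟫ := by
        rw [hγ, ← hzk]
        show ⟪a, x + k⟫ = ⟪a, k⟫
        rw [inner_add_right, hx']; ring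
      have hk' : k - ⟪a, k⟫ • a ∈ K := hPH hc k hkK
      have hz'M : x + (k - ⟪a, k⟫ • a) ∈ M := ⟨_, hk', rfl⟩
      have hz'eq : x + (k - ⟪a, k⟫ • a) = z - γ • a := by
        rw [hγk, ← hzk]; module
      rw [hz'eq] at hz'M
      have hvar' := hvar _ hz'M
      have hcalc : ⟪z - y, z - (z - γ • a)⟫ = γ * γ := by
        have h1 : z - (z - γ • a) = γ • a := by module
        rw [h1, real_inner_smul_right, real_inner_comm a (z - y), inner_sub_right, hy', ← hγ]
        ring
      rw [hcalc] at hvar'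
      have hγ0 : γ = 0 := by
        have := mul_self_nonneg γ
        have h0 : γ * γ = 0 := le_antisymm hvar' this
        exact mul_self_eq_zero.mp h0
      show join P K x y ∈ H
      rw [hH]
      exact hγ0
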